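/- arXiv:0903.4626 — 2 statements merged into one kernel-verified Lean document; each statement's English description precedes it below -/
import Mathlib

section
/- Let p, q be real polynomials in two variables with orders o(p) > 1, o(q) > 1 satisfying max{deg(p), deg(q)} < o(p) + o(q) − 1. If T + D ≡ 0, where T = ∂p/∂x + ∂q/∂y and D = (∂p/∂x)(∂q/∂y) − (∂p/∂y)(∂q/∂x), then T ≡ 0 and D ≡ 0. -/
open MvPolynomial

/-- The order of a polynomial: minimal total degree of a monomial occurring in it. -/
noncomputable def order (p : MvPolynomial (Fin 2) ℝ) : ℕ :=
  sInf ((fun m : Fin 2 →₀ ℕ => m 0 + m 1) '' p.support)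

open Finsupp in
lemma coeff_pderiv {σ : Type*} [DecidableEq σ] (i : σ) (p : MvPolynomial σ ℝ)
    (m : σ →₀ ℕ) :
    coeff m (pderiv i p) = (m i + 1) * coeff (m + Finsupp.single i 1) p := by
  induction p using MvPolynomial.induction_on' with
  | add f g hf hg => simp [map_add, hf, hg, mul_add]
  | monomial n a =>
    rw [pderiv_monomial]
    simp only [coeff_monomial]
    rcases eq_or_ne n (m + Finsupp.single i 1) with h | h
    · subst h
      have h1 : m + Finsupp.single i 1 - Finsupp.single i 1 = m := by
        ext j; simp [Finsupp.single_apply]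
      rw [if_pos rfl, if_pos h1]
      simp
      ring
    · rw [if_neg h]
      rcases eq_or_ne (n - Finsupp.single i 1) m with h2 | h2
      · have hni : n i = 0 := by
          by_contra hni
          apply h
          ext j
          have h3 := DFunLike.congr_fun h2 j
          simp only [Finsupp.tsub_apply, Finsupp.add_apply, Finsupp.single_apply] at h3 ⊢
          rcases eq_or_ne i j with rfl | hij
          · simp at h3 ⊢; omega
          · simp [hij] at h3 ⊢; omega
        have : a * (n i : ℝ) = 0 := by simp [hni]
        simp [h2, this]
      · simp [h2]

lemma sum_eq (n : Fin 2 →₀ ℕ) : (n.sum fun _ e => e) = n 0 + n 1 := by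
  rw [Finsupp.sum_fintype _ _ (fun _ => rfl), Fin.sum_univ_two]

lemma mem_supp_bounds {p : MvPolynomial (Fin 2) ℝ} {n : Fin 2 →₀ ℕ}
    (h : n ∈ p.support) : order p ≤ n 0 + n 1 ∧ n 0 + n 1 ≤ p.totalDegree := by
  constructor
  · exact Nat.sInf_le ⟨n, h, rfl⟩
  · rw [← sum_eq]; exact MvPolynomial.le_totalDegree h

lemma pderiv_supp {p : MvPolynomial (Fin 2) ℝ} {i : Fin 2} {m : Fin 2 →₀ ℕ}
    (h : m ∈ (pderiv i p).support) :
    order p ≤ m 0 + m 1 + 1 ∧ m 0 + m 1 + 1 ≤ p.totalDegree := by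
  rw [MvPolynomial.mem_support_iff, _root_.coeff_pderiv] at h
  have h2 : m + Finsupp.single i 1 ∈ p.support := by
    rw [MvPolynomial.mem_support_iff]; intro h3; simp [h3] at h
  have := mem_supp_bounds h2
  have e0 := Finsupp.add_apply m (Finsupp.single i 1) 0
  have e1 := Finsupp.add_apply m (Finsupp.single i 1) 1
  have : Finsupp.single i 1 0 + Finsupp.single i 1 1 = 1 := by
    fin_cases i <;> simp
  omega

theorem stmt2 (p q : MvPolynomial (Fin 2) ℝ)
    (hp : 1 < order p) (hq : 1 < order q)
    (hdeg : max p.totalDegree q.totalDegree + 1 < order p + order q)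
    (hTD : (pderiv 0 p + pderiv 1 q) +
      (pderiv 0 p * pderiv 1 q - pderiv 1 p * pderiv 0 q) = 0) :
    pderiv 0 p + pderiv 1 q = 0 ∧
      pderiv 0 p * pderiv 1 q - pderiv 1 p * pderiv 0 q = 0 := by
  have hT : pderiv 0 p + pderiv 1 q = 0 := by
    ext m
    by_contra hc
    rw [MvPolynomial.coeff_zero] at hc
    -- bound from T
    have hTb : m 0 + m 1 + 1 ≤ max p.totalDegree q.totalDegree := by
      rw [MvPolynomial.coeff_add] at hc
      rcases (by by_contra h; push_neg at h; simp [h.1, h.2] at hc :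
        MvPolynomial.coeff m (pderiv 0 p) ≠ 0 ∨ MvPolynomial.coeff m (pderiv 1 q) ≠ 0) with h | h
      · exact le_trans (pderiv_supp (MvPolynomial.mem_support_iff.2 h)).2 (le_max_left _ _)
      · exact le_trans (pderiv_supp (MvPolynomial.mem_support_iff.2 h)).2 (le_max_right _ _)
    -- bound from D
    have hD : MvPolynomial.coeff m (pderiv 0 p * pderiv 1 q - pderiv 1 p * pderiv 0 q) ≠ 0 := by
      intro h
      have := congrArg (MvPolynomial.coeff m) hTD
      simp [MvPolynomial.coeff_add, h] at this
      exact hc this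
    have hDb : order p + order q ≤ m 0 + m 1 + 2 := by
      rw [MvPolynomial.coeff_sub] at hD
      have : MvPolynomial.coeff m (pderiv 0 p * pderiv 1 q) ≠ 0 ∨
          MvPolynomial.coeff m (pderiv 1 p * pderiv 0 q) ≠ 0 := by
        by_contra h; push_neg at h; simp [h.1, h.2] at hD
      rcases this with h | h <;>
      · have hm := MvPolynomial.support_mul _ _ (MvPolynomial.mem_support_iff.2 h)
        rw [Finset.mem_add] at hm
        obtain ⟨a, ha, b, hb, rfl⟩ := hm
        have h1 := (pderiv_supp ha).1
        have h2 := (pderiv_supp hb).1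
        have e0 : (a + b) 0 = a 0 + b 0 := rfl
        have e1 : (a + b) 1 = a 1 + b 1 := rfl
        omega
    omega
  refine ⟨hT, ?_⟩
  rw [hT, zero_add] at hTD
  exact hTD
end

section
/- Suppose the planar Jacobian conjecture for global asymptotic stability holds in the following form: any C¹ map F : ℝ² → ℝ² with F(0)=0 whose Jacobian matrix at every point has eigenvalues with negative real part is injective. Let Φ*(u,v) = (u + p*(u,v), v + q*(u,v)) be a polynomial map with constant Jacobian determinant, o(p*) > 1, o(q*) > 1, and ∂p*/∂u + ∂q*/∂v ≥ 0 everywhere. Then Φ* is injective. -/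
open MvPolynomial

noncomputable def evalDeriv (r : MvPolynomial (Fin 2) ℝ) (x : Fin 2 → ℝ) :
    (Fin 2 → ℝ) →L[ℝ] ℝ :=
  eval x (pderiv 0 r) • ContinuousLinearMap.proj 0
    + eval x (pderiv 1 r) • ContinuousLinearMap.proj 1

lemma evalDeriv_apply (r : MvPolynomial (Fin 2) ℝ) (x v : Fin 2 → ℝ) :
    evalDeriv r x v = eval x (pderiv 0 r) * v 0 + eval x (pderiv 1 r) * v 1 := by
  simp [evalDeriv]

lemma hasFDerivAt_eval (r : MvPolynomial (Fin 2) ℝ) (x : Fin 2 → ℝ) :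
    HasFDerivAt (fun v : Fin 2 → ℝ => eval v r) (evalDeriv r x) x := by
  induction r using MvPolynomial.induction_on with
  | C a =>
      have : evalDeriv (C a) x = 0 := by
        ext v; simp only [evalDeriv_apply, pderiv_C]; simp
      rw [this]
      have : (fun v : Fin 2 → ℝ => eval v (C a)) = fun _ : Fin 2 → ℝ => a := by
        funext v; simp
      rw [this]
      exact hasFDerivAt_const a x
  | add f g hf hg =>
      have : evalDeriv (f + g) x = evalDeriv f x + evalDeriv g x := by
        ext v; simp only [evalDeriv_apply, map_add, ContinuousLinearMap.add_apply]; ring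
      rw [this]
      have : (fun v : Fin 2 → ℝ => eval v (f + g))
          = fun v : Fin 2 → ℝ => eval v f + eval v g := by funext v; simp
      rw [this]
      exact hf.add hg
  | mul_X f i hf =>
      have h2 : HasFDerivAt (fun v : Fin 2 → ℝ => eval v f * v i)
          ((eval x f) • (ContinuousLinearMap.proj i : (Fin 2 → ℝ) →L[ℝ] ℝ)
            + (x i) • evalDeriv f x) x :=
        hf.mul (hasFDerivAt_apply i x)
      have heq : evalDeriv (f * X i) x
          = (eval x f) • (ContinuousLinearMap.proj i : (Fin 2 → ℝ) →L[ℝ] ℝ)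
            + (x i) • evalDeriv f x := by
        ext v
        fin_cases i <;>
          simp [evalDeriv_apply, pderiv_mul, pderiv_X, Pi.single_apply] <;> ring
      have hfun : (fun v : Fin 2 → ℝ => eval v (f * X i))
          = fun v : Fin 2 → ℝ => eval v f * v i := by
        funext v; simp
      rw [heq, hfun]
      exact h2

lemma contDiff_eval (r : MvPolynomial (Fin 2) ℝ) :
    ContDiff ℝ 1 (fun v : Fin 2 → ℝ => eval v r) := by
  induction r using MvPolynomial.induction_on with
  | C a => simpa using contDiff_const (c := a)
  | add f g hf hg => simpa using hf.add hg
  | mul_X f i hf =>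
      have : ContDiff ℝ 1 (fun v : Fin 2 → ℝ => eval v f * v i) :=
        hf.mul ((ContinuousLinearMap.proj i : (Fin 2 → ℝ) →L[ℝ] ℝ).contDiff)
      simpa using this

lemma constCoeff_pderiv_eq_zero (r : MvPolynomial (Fin 2) ℝ)
    (hr : ∀ m ∈ r.support, 1 < m 0 + m 1) (j : Fin 2) :
    eval (0 : Fin 2 → ℝ) (pderiv j r) = 0 := by
  rw [eval_zero]
  conv_lhs => rw [r.as_sum]
  rw [map_sum, map_sum]
  refine Finset.sum_eq_zero fun m hm => ?_
  rw [pderiv_monomial]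
  rw [constantCoeff_monomial]
  rw [if_neg]
  intro h0
  have hle : m ≤ Finsupp.single j 1 := tsub_eq_zero_iff_le.mp h0
  have h0' : m 0 ≤ (Finsupp.single j 1) 0 := hle 0
  have h1' : m 1 ≤ (Finsupp.single j 1) 1 := hle 1
  have := hr m hm
  fin_cases j <;> simp [Finsupp.single_apply] at h0' h1' <;> omega

lemma root_re_neg (t : ℝ) (ht : 2 ≤ t) (z : ℂ) (hz : z * z + t * z + 1 = 0) :
    z.re < 0 := by
  have h1 := congrArg Complex.re hz
  have h2 := congrArg Complex.im hz
  simp [Complex.add_re, Complex.add_im, Complex.mul_re, Complex.mul_im,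
    Complex.ofReal_re, Complex.ofReal_im] at h1 h2
  set x := z.re
  set y := z.im
  have hy : y * (2 * x + t) = 0 := by linarith [h2]
  rcases mul_eq_zero.mp hy with hy0 | hxt
  · rw [hy0] at h1
    by_contra hx
    push_neg at hx
    nlinarith
  · linarith [hxt]

/-- The Jacobian matrix of a map F : ℝ² → ℝ² at a point, via the Fréchet derivative. -/
noncomputable def jacMatrix (F : (Fin 2 → ℝ) → (Fin 2 → ℝ)) (x : Fin 2 → ℝ) :
    Matrix (Fin 2) (Fin 2) ℝ :=
  fun i j => fderiv ℝ F x (Pi.single j 1) i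

theorem stmt14
    (GAS : ∀ F : (Fin 2 → ℝ) → (Fin 2 → ℝ), ContDiff ℝ 1 F → F 0 = 0 →
      (∀ x : Fin 2 → ℝ, ∀ z ∈ spectrum ℂ ((jacMatrix F x).map (Complex.ofReal ·)),
        z.re < 0) →
      Function.Injective F)
    (p q : MvPolynomial (Fin 2) ℝ)
    (hp : ∀ m ∈ p.support, 1 < m 0 + m 1)
    (hq : ∀ m ∈ q.support, 1 < m 0 + m 1)
    (hconst : ∃ c : ℝ,
      (1 + pderiv 0 p) * (1 + pderiv 1 q) - pderiv 1 p * pderiv 0 q = C c)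
    (htr : ∀ x : Fin 2 → ℝ, 0 ≤ eval x (pderiv 0 p + pderiv 1 q)) :
    Function.Injective (fun v : Fin 2 → ℝ => ![v 0 + eval v p, v 1 + eval v q]) := by
  classical
  set F : (Fin 2 → ℝ) → (Fin 2 → ℝ) :=
    fun v => ![-(v 0 + eval v p), -(v 1 + eval v q)] with hF
  -- derivative of F
  have hD : ∀ x : Fin 2 → ℝ, HasFDerivAt F
      (ContinuousLinearMap.pi
        (![-(ContinuousLinearMap.proj 0 + evalDeriv p x),
           -(ContinuousLinearMap.proj 1 + evalDeriv q x)] :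
          Fin 2 → ((Fin 2 → ℝ) →L[ℝ] ℝ))) x := by
    intro x
    apply hasFDerivAt_pi''
    intro i
    rw [ContinuousLinearMap.proj_pi]
    fin_cases i
    · have h := ((hasFDerivAt_apply 0 x).add (hasFDerivAt_eval p x)).neg
      simp [hF] at h ⊢
      exact h
    · have h := ((hasFDerivAt_apply 1 x).add (hasFDerivAt_eval q x)).neg
      simp [hF] at h ⊢
      exact h
  -- entries of the Jacobian
  have hjac : ∀ x : Fin 2 → ℝ, ∀ i j : Fin 2,
      jacMatrix F x i j =
        (![![-(1 + eval x (pderiv 0 p)), -(eval x (pderiv 1 p))],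
           ![-(eval x (pderiv 0 q)), -(1 + eval x (pderiv 1 q))]] :
          Matrix (Fin 2) (Fin 2) ℝ) i j := by
    intro x i j
    have hfd := (hD x).fderiv
    rw [jacMatrix, hfd]
    fin_cases i <;> fin_cases j <;>
      simp [ContinuousLinearMap.pi_apply, evalDeriv_apply, Pi.single_apply]
  -- constant determinant equals 1
  obtain ⟨c0, hc⟩ := hconst
  have hdet : ∀ x : Fin 2 → ℝ,
      (1 + eval x (pderiv 0 p)) * (1 + eval x (pderiv 1 q))
        - eval x (pderiv 1 p) * eval x (pderiv 0 q) = c0 := by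
    intro x
    have := congrArg (eval x) hc
    simpa using this
  have hc1 : c0 = 1 := by
    have := hdet 0
    rw [constCoeff_pderiv_eq_zero p hp 0, constCoeff_pderiv_eq_zero q hq 1,
      constCoeff_pderiv_eq_zero p hp 1, constCoeff_pderiv_eq_zero q hq 0] at this
    linarith
  -- F is injective via GAS
  have hFinj : Function.Injective F := by
    apply GAS
    · -- ContDiff
      rw [hF]
      apply contDiff_pi.mpr
      intro i
      fin_cases i
      · simpa using
          (((ContinuousLinearMap.proj 0 : (Fin 2 → ℝ) →L[ℝ] ℝ).contDiff).add
            (contDiff_eval p)).neg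
      · simpa using
          (((ContinuousLinearMap.proj 1 : (Fin 2 → ℝ) →L[ℝ] ℝ).contDiff).add
            (contDiff_eval q)).neg
    · -- F 0 = 0
      have hp0 : eval (0 : Fin 2 → ℝ) p = 0 := by
        rw [eval_zero]
        by_contra h
        have := hp 0 (mem_support_iff.mpr h)
        simp at this
      have hq0 : eval (0 : Fin 2 → ℝ) q = 0 := by
        rw [eval_zero]
        by_contra h
        have := hq 0 (mem_support_iff.mpr h)
        simp at this
      rw [eval_zero] at hp0 hq0
      funext i
      fin_cases i <;> simp [hF, eval_zero, hp0, hq0]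
    · -- spectrum
      intro x z hz
      set a := eval x (pderiv 0 p)
      set b := eval x (pderiv 1 p)
      set c := eval x (pderiv 0 q)
      set d := eval x (pderiv 1 q)
      have hdetz : ((algebraMap ℂ (Matrix (Fin 2) (Fin 2) ℂ) z)
          - (jacMatrix F x).map (Complex.ofReal ·)).det = 0 := by
        by_contra h
        exact (spectrum.mem_iff.mp hz)
          ((Matrix.isUnit_iff_isUnit_det _).mpr (isUnit_iff_ne_zero.mpr h))
      rw [Matrix.det_fin_two] at hdetz
      simp only [Matrix.sub_apply, Matrix.map_apply, Matrix.algebraMap_matrix_apply,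
        hjac x] at hdetz
      norm_num at hdetz
      have heq : z * z + ((2 + a + d : ℝ) : ℂ) * z + 1 = 0 := by
        have hd1 : (1 + a) * (1 + d) - b * c = 1 := by
          have := hdet x; rw [hc1] at this; exact this
        have hd1' : ((1:ℂ) + a) * (1 + d) - b * c = 1 := by
          exact_mod_cast congrArg (Complex.ofReal ·) hd1
        push_cast
        linear_combination hdetz - hd1'
      have ht : (2:ℝ) ≤ 2 + a + d := by
        have := htr x
        simp only [map_add] at this
        linarith
      exact root_re_neg _ ht z heq
  -- transfer injectivity
  intro u v h
  apply hFinj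
  have h0 := congrFun h 0
  have h1 := congrFun h 1
  simp only [Matrix.cons_val_zero, Matrix.cons_val_one, Matrix.head_cons] at h0 h1
  funext i
  fin_cases i <;> simp [hF] <;> linarith
end
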